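/- Let m be odd, gcd(i,m)=1, and F(x)=x^{2^i+1} on F_{2^m}. Then for every a ≠ 0, the set H_a = {F(x+a)+F(x) : x ∈ F_{2^m}} equals {y ∈ F_{2^m} : tr(a^{-(2^i+1)} y) = 1}, the complement of a linear hyperplane. If instead m is even, H_a = {y : tr(a^{-(2^i+1)} y) = 0}. -/

import Mathlib

open Algebra Module

variable {m : ℕ}

local notation "K" => GaloisField 2

noncomputable def frobAlg (m : ℕ) : K m ≃ₐ[ZMod 2] K m :=
  AlgEquiv.ofRingEquiv (f := frobeniusEquiv (K m) 2) (fun x => by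
    rw [frobeniusEquiv_apply, frobenius_def, ← map_pow, ZMod.pow_card])

lemma tr_sq (x : K m) :
    Algebra.trace (ZMod 2) (K m) (x ^ 2) = Algebra.trace (ZMod 2) (K m) x := by
  simpa [frobAlg, frobeniusEquiv_apply, frobenius_def] using Algebra.trace_eq_of_algEquiv (frobAlg m) x

lemma tr_pow_pow (i : ℕ) (x : K m) :
    Algebra.trace (ZMod 2) (K m) (x ^ 2 ^ i) = Algebra.trace (ZMod 2) (K m) x := by
  induction i with
  | zero => simp
  | succ n ih => rw [pow_succ, pow_mul, tr_sq, ih]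

lemma pow_pow_mul_fix {i s : ℕ} {x : K m} (h : x ^ 2 ^ i = x) : x ^ 2 ^ (i * s) = x := by
  induction s with
  | zero => simp
  | succ n ih => rw [Nat.mul_succ, pow_add, pow_mul, ih, h]

lemma ker_fix (hm : 0 < m) (i : ℕ) (hi : Nat.gcd i m = 1) {x : K m}
    (h : x ^ 2 ^ i = x) : x ^ 2 = x := by
  have hcard : x ^ 2 ^ m = x := by
    classical
    have : Fintype (K m) := Fintype.ofFinite _
    have h1 := FiniteField.pow_card x
    rwa [Nat.card_eq_fintype_card.symm, GaloisField.card 2 m hm.ne'] at h1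
  rcases Nat.eq_or_lt_of_le hm with hm1 | hm2
  · -- m = 1
    subst hm1
    simpa using hcard
  · -- m ≥ 2
    have hcop : Nat.Coprime i m := hi
    obtain ⟨s, -, hs⟩ := Nat.exists_mul_mod_eq_one_of_coprime hcop hm2
    have hdiv : i * s = m * (i * s / m) + 1 := by
      conv_lhs => rw [← Nat.div_add_mod (i * s) m, hs]
    have h1 : x ^ 2 ^ (i * s) = x := pow_pow_mul_fix h
    have h2 : x ^ 2 ^ (m * (i * s / m)) = x := pow_pow_mul_fix hcard
    rw [hdiv, pow_succ, pow_mul, h2] at h1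
    exact h1

noncomputable def Lmap (m i : ℕ) : K m →ₗ[ZMod 2] K m :=
  (AddMonoidHom.mk' (fun u => u ^ 2 ^ i + u) (by
    intro x y
    show (x + y) ^ 2 ^ i + (x + y) = (x ^ 2 ^ i + x) + (y ^ 2 ^ i + y)
    rw [add_pow_char_pow (p := 2)]; ring)).toZModLinearMap 2

lemma Lmap_apply (m i : ℕ) (u : K m) : Lmap m i u = u ^ 2 ^ i + u := rfl

lemma range_le_ker (m i : ℕ) :
    LinearMap.range (Lmap m i) ≤ LinearMap.ker (Algebra.trace (ZMod 2) (K m)) := by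
  rintro _ ⟨u, rfl⟩
  simp only [LinearMap.mem_ker, Lmap_apply, map_add, tr_pow_pow]
  exact CharTwo.add_self_eq_zero _

lemma ker_L_eq (hm : 0 < m) (i : ℕ) (hi : Nat.gcd i m = 1) :
    LinearMap.ker (Lmap m i) = Submodule.span (ZMod 2) {(1 : K m)} := by
  ext x
  simp only [LinearMap.mem_ker, Lmap_apply]
  constructor
  · intro hx
    have hfix : x ^ 2 ^ i = x := by
      have h2 : x ^ 2 ^ i = 0 + x := CharTwo.add_eq_iff_eq_add.mp hx
      simpa using h2
    have hsq : x ^ 2 = x := ker_fix hm i hi hfix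
    have : x * (x - 1) = 0 := by ring_nf; rw [sq] at hsq; linear_combination hsq
    rcases mul_eq_zero.mp this with h0 | h1
    · simp [h0]
    · have : x = 1 := by linear_combination h1
      rw [this]; exact Submodule.mem_span_singleton_self _
  · intro hx
    obtain ⟨c, rfl⟩ := Submodule.mem_span_singleton.mp hx
    fin_cases c
    · erw [zero_smul]; simp
    · erw [one_smul]; simp [CharTwo.add_self_eq_zero]

lemma range_eq_ker (hm : 0 < m) (i : ℕ) (hi : Nat.gcd i m = 1) :
    LinearMap.range (Lmap m i) = LinearMap.ker (Algebra.trace (ZMod 2) (K m)) := by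
  have hsep : Algebra.IsSeparable (ZMod 2) (K m) := inferInstance
  have hfr : finrank (ZMod 2) (K m) = m := GaloisField.finrank 2 hm.ne'
  have hkerL : finrank (ZMod 2) (LinearMap.ker (Lmap m i)) = 1 := by
    rw [ker_L_eq hm i hi]
    exact finrank_span_singleton one_ne_zero
  have hrangeL : finrank (ZMod 2) (LinearMap.range (Lmap m i)) = m - 1 := by
    have := LinearMap.finrank_range_add_finrank_ker (Lmap m i)
    omega
  have htr_surj : Function.Surjective (Algebra.trace (ZMod 2) (K m)) :=
    Algebra.trace_surjective (ZMod 2) (K m)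
  have hrange_tr : finrank (ZMod 2) (LinearMap.range (Algebra.trace (ZMod 2) (K m))) = 1 := by
    rw [LinearMap.range_eq_top.mpr htr_surj]
    simpa using finrank_self (ZMod 2)
  have hker_tr : finrank (ZMod 2) (LinearMap.ker (Algebra.trace (ZMod 2) (K m))) = m - 1 := by
    have := LinearMap.finrank_range_add_finrank_ker (Algebra.trace (ZMod 2) (K m))
    omega
  exact Submodule.eq_of_le_of_finrank_eq (range_le_ker m i) (by rw [hrangeL, hker_tr])

lemma exists_iff_tr (hm : 0 < m) (i : ℕ) (hi : Nat.gcd i m = 1) (z : K m) :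
    (∃ u : K m, u ^ 2 ^ i + u = z) ↔ Algebra.trace (ZMod 2) (K m) z = 0 := by
  have h := range_eq_ker hm i hi
  constructor
  · rintro ⟨u, rfl⟩
    have : Lmap m i u ∈ LinearMap.ker (Algebra.trace (ZMod 2) (K m)) :=
      h ▸ LinearMap.mem_range_self _ u
    simpa [Lmap_apply] using this
  · intro hz
    have : z ∈ LinearMap.range (Lmap m i) := h ▸ hz
    obtain ⟨u, hu⟩ := this
    exact ⟨u, hu⟩

lemma keyid (i : ℕ) (a u : K m) :
    (u * a + a) ^ (2 ^ i + 1) + (u * a) ^ (2 ^ i + 1)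
      = a ^ (2 ^ i + 1) * (u ^ 2 ^ i + u + 1) := by
  have h1 : u * a + a = (u + 1) * a := by ring
  have h2 : (u + 1) ^ 2 ^ i = u ^ 2 ^ i + 1 := by
    rw [add_pow_char_pow (p := 2), one_pow]
  rw [h1, mul_pow, mul_pow, ← add_mul, pow_succ, pow_succ, h2]
  have h3 : (u ^ 2 ^ i + 1) * (u + 1) + u ^ 2 ^ i * u = u ^ 2 ^ i + u + 1 := by
    linear_combination (u ^ 2 ^ i * u) * CharTwo.two_eq_zero (R := K m)
  rw [h3]
  ring

lemma main_iff (hm : 0 < m) (i : ℕ) (hi : Nat.gcd i m = 1) (a : K m) (ha : a ≠ 0) (y : K m) :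
    (∃ x : K m, (x + a) ^ (2 ^ i + 1) + x ^ (2 ^ i + 1) = y) ↔
      Algebra.trace (ZMod 2) (K m) (a⁻¹ ^ (2 ^ i + 1) * y) = (m : ZMod 2) := by
  have hap : a ^ (2 ^ i + 1) ≠ 0 := pow_ne_zero _ ha
  have step1 : (∃ x : K m, (x + a) ^ (2 ^ i + 1) + x ^ (2 ^ i + 1) = y) ↔
      (∃ u : K m, u ^ 2 ^ i + u = a⁻¹ ^ (2 ^ i + 1) * y + 1) := by
    constructor
    · rintro ⟨x, rfl⟩
      refine ⟨x * a⁻¹, ?_⟩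
      have hx : x * a⁻¹ * a = x := by field_simp
      have := keyid i a (x * a⁻¹)
      rw [hx] at this
      rw [this, ← mul_assoc, ← mul_pow, inv_mul_cancel₀ ha, one_pow, one_mul]
      linear_combination (-1 : K m) * CharTwo.two_eq_zero (R := K m)
    · rintro ⟨u, hu⟩
      refine ⟨u * a, ?_⟩
      rw [keyid i a u, hu, add_assoc, CharTwo.add_self_eq_zero, add_zero, ← mul_assoc,
        ← mul_pow, mul_inv_cancel₀ ha, one_pow, one_mul]
  rw [step1]
  rw [exists_iff_tr hm i hi]
  have htr1 : Algebra.trace (ZMod 2) (K m) 1 = (m : ZMod 2) := by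
    have h5 := Algebra.trace_algebraMap (S := K m) (1 : ZMod 2)
    rw [map_one] at h5
    rw [h5, GaloisField.finrank 2 hm.ne']
    simp
  rw [map_add, htr1]
  constructor
  · intro h
    have := CharTwo.add_eq_iff_eq_add.mp h
    simpa using this
  · intro h
    rw [h]
    exact CharTwo.add_self_eq_zero _

/-- For `F(x) = x^{2^i+1}` with `gcd(i,m) = 1` and `a ≠ 0`, the set
`H_a = {F(x+a) + F(x) : x}` is `{y : tr(a^{-(2^i+1)} y) = 1}` when `m` is odd,
and `{y : tr(a^{-(2^i+1)} y) = 0}` when `m` is even. -/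
theorem stmt_13 (m i : ℕ) (hm : 0 < m) (hi : Nat.gcd i m = 1)
    (a : GaloisField 2 m) (ha : a ≠ 0) :
    (Odd m →
      {y : GaloisField 2 m | ∃ x : GaloisField 2 m,
          (x + a) ^ (2 ^ i + 1) + x ^ (2 ^ i + 1) = y} =
        {y : GaloisField 2 m |
          Algebra.trace (ZMod 2) (GaloisField 2 m) (a⁻¹ ^ (2 ^ i + 1) * y) = 1}) ∧
    (Even m →
      {y : GaloisField 2 m | ∃ x : GaloisField 2 m,
          (x + a) ^ (2 ^ i + 1) + x ^ (2 ^ i + 1) = y} =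
        {y : GaloisField 2 m |
          Algebra.trace (ZMod 2) (GaloisField 2 m) (a⁻¹ ^ (2 ^ i + 1) * y) = 0}) := by
  constructor
  · intro hodd
    have hcast : (m : ZMod 2) = 1 := by
      rw [← ZMod.natCast_mod, Nat.odd_iff.mp hodd, Nat.cast_one]
    ext y
    simp only [Set.mem_setOf_eq, main_iff hm i hi a ha y, hcast]
  · intro heven
    have hcast : (m : ZMod 2) = 0 := by
      rw [← ZMod.natCast_mod, Nat.even_iff.mp heven, Nat.cast_zero]
    ext y
    simp only [Set.mem_setOf_eq, main_iff hm i hi a ha y, hcast]
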